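/- In the Kingman limit n → ∞, θ → 0 with nθ = γ > 0 fixed, the distribution P(P_{n,k}=p) = [n!/(n-p)!]·B_{k,p}(θ)/(nθ)_k converges to P(P_k=p) = γ^p s(k,p)/(γ)_k, where s(k,p) is the unsigned Stirling number of the first kind. -/

import Mathlib

open Finset Filter

/-- Rising factorial `(x)_k = x(x+1)⋯(x+k-1)`. -/
noncomputable def rf (x : ℝ) (k : ℕ) : ℝ := ∏ i ∈ Finset.range k, (x + i)

/-- The Bell polynomial `B_{k,p}(θ)` in the variables `x_i = (θ)_i`. -/
noncomputable def BellP (θ : ℝ) (k p : ℕ) : ℝ :=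
  ((k.factorial : ℝ) / (p.factorial : ℝ)) *
    ∑ b ∈ Finset.Nat.antidiagonalTuple p k,
      if ∀ q, 1 ≤ b q then ∏ q, rf θ (b q) / ((b q).factorial : ℝ) else 0

/-- Unsigned Stirling numbers of the first kind. -/
def stirling1 : ℕ → ℕ → ℕ
  | 0, 0 => 1
  | 0, _ + 1 => 0
  | _ + 1, 0 => 0
  | k + 1, p + 1 => k * stirling1 k (p + 1) + stirling1 k p

section Aux
open PowerSeries


noncomputable def Lser : PowerSeries ℝ :=
  PowerSeries.mk fun m => if m = 0 then 0 else (m : ℝ)⁻¹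

noncomputable def Tt (k p : ℕ) : ℝ :=
  ∑ b ∈ Finset.Nat.antidiagonalTuple p k,
    if ∀ q, 1 ≤ b q then ∏ q, ((b q : ℝ))⁻¹ else 0

lemma sum_adT_succ {M : Type*} [AddCommMonoid M] (p k : ℕ) (G : (Fin (p+1) → ℕ) → M) :
    ∑ b ∈ Finset.Nat.antidiagonalTuple (p+1) k, G b
      = ∑ mr ∈ Finset.HasAntidiagonal.antidiagonal k, ∑ t ∈ Finset.Nat.antidiagonalTuple p mr.2,
          G (Fin.cons mr.1 t) := by
  rw [Finset.sum_sigma']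
  refine Finset.sum_nbij' (fun b : Fin (p+1) → ℕ => (⟨(b 0, ∑ q : Fin p, b q.succ), Fin.tail b⟩ : Σ _ : ℕ × ℕ, Fin p → ℕ))
    (fun x => Fin.cons x.1.1 x.2) ?_ ?_ ?_ ?_ ?_
  · intro b hb
    rw [Finset.Nat.mem_antidiagonalTuple] at hb
    refine Finset.mem_sigma.2 ⟨?_, ?_⟩
    · rw [Finset.HasAntidiagonal.mem_antidiagonal]
      rw [← hb, Fin.sum_univ_succ]
    · rw [Finset.Nat.mem_antidiagonalTuple]
      rfl
  · intro x hx
    rw [Finset.mem_sigma, Finset.HasAntidiagonal.mem_antidiagonal, Finset.Nat.mem_antidiagonalTuple] at hx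
    rw [Finset.Nat.mem_antidiagonalTuple, Fin.sum_univ_succ]
    simp only [Fin.cons_zero, Fin.cons_succ]
    rw [hx.2, hx.1]
  · intro b _
    exact Fin.cons_self_tail b
  · intro x hx
    rw [Finset.mem_sigma, Finset.HasAntidiagonal.mem_antidiagonal, Finset.Nat.mem_antidiagonalTuple] at hx
    refine Sigma.ext ?_ (heq_of_eq ?_)
    · simp only [Fin.cons_zero, Fin.cons_succ]
      rw [hx.2]
    · simp only [Fin.tail_cons]
  · intro b _
    rw [Fin.cons_self_tail b]

lemma coeff_Lser (m : ℕ) : PowerSeries.coeff m Lser = if m = 0 then 0 else (m : ℝ)⁻¹ := by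
  simp [Lser]

lemma coeff_Lser_pow (p k : ℕ) : PowerSeries.coeff k (Lser ^ p) = Tt k p := by
  induction p generalizing k with
  | zero =>
    rw [pow_zero, PowerSeries.coeff_one, Tt]
    cases k with
    | zero => simp
    | succ k => simp
  | succ p ih =>
    rw [pow_succ', PowerSeries.coeff_mul, Tt, sum_adT_succ]
    refine Finset.sum_congr rfl fun mr _ => ?_
    rw [ih, coeff_Lser, Tt, Finset.mul_sum]
    refine Finset.sum_congr rfl fun t _ => ?_
    have hcond : (∀ q : Fin (p+1), 1 ≤ (Fin.cons mr.1 t : Fin (p+1) → ℕ) q) ↔ (1 ≤ mr.1 ∧ ∀ q : Fin p, 1 ≤ t q) := by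
      constructor
      · intro h
        exact ⟨by simpa using h 0, fun q => by simpa using h q.succ⟩
      · rintro ⟨h1, h2⟩ q
        refine Fin.cases ?_ ?_ q
        · simpa using h1
        · intro i; simpa using h2 i
    have hprod : (∏ q : Fin (p+1), (((Fin.cons mr.1 t : Fin (p+1) → ℕ) q : ℕ) : ℝ)⁻¹)
        = ((mr.1 : ℝ))⁻¹ * ∏ q : Fin p, ((t q : ℝ))⁻¹ := by
      rw [Fin.prod_univ_succ]
      simp
    by_cases h1 : mr.1 = 0
    · have : ¬ (∀ q : Fin (p+1), 1 ≤ (Fin.cons mr.1 t : Fin (p+1) → ℕ) q) := by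
        intro h; have := h 0; simp [h1] at this
      rw [if_neg this, if_pos h1, zero_mul]
    · by_cases h2 : ∀ q : Fin p, 1 ≤ t q
      · rw [if_pos (hcond.2 ⟨Nat.one_le_iff_ne_zero.2 h1, h2⟩), if_neg h1, if_pos h2, hprod]
      · have : ¬ (∀ q : Fin (p+1), 1 ≤ (Fin.cons mr.1 t : Fin (p+1) → ℕ) q) := fun h => h2 (hcond.1 h).2
        rw [if_neg this, if_neg h2, mul_zero]

lemma deriv_Lser : (1 - PowerSeries.X) * (PowerSeries.derivative ℝ Lser) = 1 := by
  ext n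
  rw [sub_mul, one_mul, map_sub, PowerSeries.coeff_derivative, coeff_Lser]
  cases n with
  | zero =>
    simp
  | succ n =>
    rw [PowerSeries.coeff_succ_X_mul, PowerSeries.coeff_derivative, coeff_Lser]
    have h1 : (n + 1 : ℕ) ≠ 0 := Nat.succ_ne_zero n
    have h2 : (n + 1 + 1 : ℕ) ≠ 0 := Nat.succ_ne_zero _
    rw [if_neg h2, if_neg h1, PowerSeries.coeff_one, if_neg h1]
    push_cast
    field_simp
    norm_num

lemma key_identity (p : ℕ) :
    (1 - PowerSeries.X) * (PowerSeries.derivative ℝ (Lser ^ (p+1)))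
      = PowerSeries.C ((p : ℝ) + 1) * Lser ^ p := by
  rw [Derivation.leibniz_pow, Nat.add_sub_cancel, nsmul_eq_mul, smul_eq_mul,
    show ((p:ℝ)+1) = ((p+1 : ℕ) : ℝ) by push_cast; ring, map_natCast]
  rw [show (1 - PowerSeries.X) * (((p+1 : ℕ) : ℝ⟦X⟧) * (Lser ^ p * (PowerSeries.derivative ℝ) Lser))
      = ((p+1 : ℕ) : ℝ⟦X⟧) * Lser ^ p * ((1 - PowerSeries.X) * (PowerSeries.derivative ℝ) Lser) by ring,
    deriv_Lser, mul_one]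

lemma Tt_rec (k p : ℕ) :
    ((k : ℝ) + 1) * Tt (k+1) (p+1) = (k : ℝ) * Tt k (p+1) + ((p : ℝ) + 1) * Tt k p := by
  have h := congrArg (PowerSeries.coeff k) (key_identity p)
  rw [sub_mul, one_mul, map_sub, PowerSeries.coeff_derivative, coeff_Lser_pow,
    PowerSeries.coeff_C_mul, coeff_Lser_pow] at h
  cases k with
  | zero =>
    have h0 : PowerSeries.coeff 0 (PowerSeries.X * (PowerSeries.derivative ℝ (Lser ^ (p+1)))) = 0 := by
      simp
    rw [h0, sub_zero] at h
    norm_num at h ⊢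
    linarith [h]
  | succ k =>
    rw [PowerSeries.coeff_succ_X_mul, PowerSeries.coeff_derivative, coeff_Lser_pow] at h
    push_cast at h ⊢
    linarith [h]

lemma Tt_k_zero (k : ℕ) : Tt k 0 = if k = 0 then 1 else 0 := by
  cases k with
  | zero => simp [Tt]
  | succ k => simp [Tt]

lemma stirling_eq (k p : ℕ) :
    ((k.factorial : ℝ) / (p.factorial : ℝ)) * Tt k p = (stirling1 k p : ℝ) := by
  induction k generalizing p with
  | zero =>
    cases p with
    | zero => simp [Tt, stirling1]
    | succ p =>
      have : Tt 0 (p+1) = 0 := by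
        rw [Tt, Finset.Nat.antidiagonalTuple_zero_right]
        simp only [Finset.sum_singleton]
        rw [if_neg]
        intro h
        exact absurd (h 0) (by simp)
      rw [this, mul_zero]
      simp [stirling1]
  | succ k ih =>
    cases p with
    | zero =>
      rw [Tt_k_zero, if_neg (Nat.succ_ne_zero k)]
      simp [stirling1]
    | succ p =>
      have hk1 : ((k : ℝ) + 1) ≠ 0 := by positivity
      have hrec := Tt_rec k p
      have hTt : Tt (k+1) (p+1) = ((k : ℝ) * Tt k (p+1) + ((p : ℝ) + 1) * Tt k p) / ((k:ℝ)+1) := by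
        field_simp
        linarith [hrec]
      rw [hTt]
      have h1 := ih (p+1)
      have h2 := ih p
      rw [show stirling1 (k+1) (p+1) = k * stirling1 k (p+1) + stirling1 k p from rfl]
      have hfk : ((k+1).factorial : ℝ) = ((k:ℝ)+1) * (k.factorial : ℝ) := by
        rw [Nat.factorial_succ]; push_cast; ring
      have hfp : ((p+1).factorial : ℝ) = ((p:ℝ)+1) * (p.factorial : ℝ) := by
        rw [Nat.factorial_succ]; push_cast; ring
      have hpf : (p.factorial : ℝ) ≠ 0 := Nat.cast_ne_zero.2 p.factorial_ne_zero
      have hp1 : ((p : ℝ) + 1) ≠ 0 := by positivity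
      push_cast
      rw [hfk, hfp]
      rw [← h1, ← h2, hfp]
      field_simp


lemma descFact_cast (p n : ℕ) (h : p ≤ n) :
    ((n.factorial : ℝ) / ((n - p).factorial : ℝ)) = ∏ q : Fin p, ((n : ℝ) - q) := by
  have hd := Nat.factorial_mul_descFactorial h
  have hne : (((n - p).factorial : ℝ)) ≠ 0 := Nat.cast_ne_zero.2 (Nat.factorial_ne_zero _)
  rw [div_eq_iff hne]
  rw [← Nat.cast_inj (R := ℝ)] at hd
  push_cast at hd
  rw [← hd, Nat.descFactorial_eq_prod_range]
  push_cast
  rw [Fin.prod_univ_eq_prod_range (fun i => (n : ℝ) - i) p]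
  rw [mul_comm]
  congr 1
  refine Finset.prod_congr rfl fun i hi => ?_
  rw [Finset.mem_range] at hi
  exact (Nat.cast_sub (le_of_lt (lt_of_lt_of_le hi h)) : ((n - i : ℕ) : ℝ) = (n:ℝ) - (i:ℝ))

lemma rf_succ' (θ : ℝ) (t : ℕ) :
    rf θ (t + 1) = θ * ∏ i ∈ Finset.range t, (θ + (i + 1)) := by
  rw [rf, Finset.prod_range_succ']
  push_cast
  rw [mul_comm]
  norm_num

lemma tendsto_factor (γ : ℝ) (c : ℝ) (m : ℕ) (hm : 1 ≤ m) :
    Tendsto (fun n : ℕ => ((n : ℝ) - c) * rf (γ / n) m / (m.factorial : ℝ))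
      atTop (nhds (γ * ((m : ℝ))⁻¹)) := by
  obtain ⟨t, rfl⟩ : ∃ t, m = t + 1 := ⟨m - 1, (Nat.succ_pred_eq_of_pos hm).symm⟩
  have h0 : Tendsto (fun n : ℕ => γ / n) atTop (nhds 0) :=
    tendsto_const_div_atTop_nhds_zero_nat γ
  have hA : Tendsto (fun n : ℕ => ((n : ℝ) - c) * (γ / n)) atTop (nhds γ) := by
    have : Tendsto (fun n : ℕ => γ - c * γ / n) atTop (nhds γ) := by
      have := (tendsto_const_div_atTop_nhds_zero_nat (c * γ)).const_sub γ
      simpa using this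
    refine this.congr' ?_
    filter_upwards [eventually_ge_atTop 1] with n hn
    have hn0 : (n : ℝ) ≠ 0 := by positivity
    field_simp
  have hB : Tendsto (fun n : ℕ => ∏ i ∈ Finset.range t, (γ / n + (i + 1)))
      atTop (nhds (t.factorial : ℝ)) := by
    have : Tendsto (fun n : ℕ => ∏ i ∈ Finset.range t, (γ / n + (i + 1)))
        atTop (nhds (∏ i ∈ Finset.range t, ((0 : ℝ) + (i + 1)))) := by
      refine tendsto_finset_prod _ fun i _ => ?_
      exact h0.add_const _
    convert this using 2
    simp only [zero_add]
    rw [← Finset.prod_range_add_one_eq_factorial t]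
    push_cast
    exact Finset.prod_congr rfl fun i _ => by ring
  have hmain : Tendsto (fun n : ℕ => (((n : ℝ) - c) * (γ / n)) *
      (∏ i ∈ Finset.range t, (γ / n + (i + 1))) / ((t+1).factorial : ℝ))
      atTop (nhds (γ * (t.factorial : ℝ) / ((t+1).factorial : ℝ))) :=
    (hA.mul hB).div_const _
  have heq : ∀ n : ℕ, ((n : ℝ) - c) * rf (γ / n) (t+1) / ((t+1).factorial : ℝ)
      = (((n : ℝ) - c) * (γ / n)) * (∏ i ∈ Finset.range t, (γ / n + (i + 1))) / ((t+1).factorial : ℝ) := by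
    intro n
    rw [rf_succ']
    ring
  rw [show γ * (((t+1 : ℕ) : ℝ))⁻¹ = γ * (t.factorial : ℝ) / ((t+1).factorial : ℝ) by
    rw [Nat.factorial_succ]
    have h1 : ((t.factorial : ℝ)) ≠ 0 := Nat.cast_ne_zero.2 (Nat.factorial_ne_zero _)
    have h2 : ((t+1 : ℕ) : ℝ) ≠ 0 := by positivity
    push_cast
    field_simp]
  exact hmain.congr fun n => (heq n).symm


lemma tendsto_term (γ : ℝ) (p : ℕ) (b : Fin p → ℕ) (hb : ∀ q, 1 ≤ b q) :
    Tendsto (fun n : ℕ => ((n.factorial : ℝ) / ((n - p).factorial : ℝ)) *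
        ∏ q, rf (γ / n) (b q) / ((b q).factorial : ℝ))
      atTop (nhds (γ ^ p * ∏ q, ((b q : ℝ))⁻¹)) := by
  have hprod : Tendsto (fun n : ℕ =>
      ∏ q : Fin p, (((n:ℝ) - (q:ℕ)) * rf (γ / n) (b q) / ((b q).factorial : ℝ)))
      atTop (nhds (∏ q : Fin p, γ * ((b q : ℝ))⁻¹)) :=
    tendsto_finset_prod _ fun q _ => tendsto_factor γ (q : ℕ) (b q) (hb q)
  have hlim : (∏ q : Fin p, γ * ((b q : ℝ))⁻¹) = γ ^ p * ∏ q, ((b q : ℝ))⁻¹ := by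
    rw [Finset.prod_mul_distrib, Finset.prod_const, Finset.card_univ, Fintype.card_fin]
  rw [← hlim]
  refine hprod.congr' ?_
  filter_upwards [eventually_ge_atTop p] with n hn
  rw [descFact_cast p n hn, ← Finset.prod_mul_distrib]
  exact Finset.prod_congr rfl fun q _ => by ring

end Aux

/-- Kingman limit: as `n → ∞`, `θ = γ/n → 0` with `nθ = γ` fixed, the law
`P(P_{n,k}=p) = [n!/(n-p)!] B_{k,p}(θ)/(nθ)_k` converges to the Ewens law
`γ^p s(k,p)/(γ)_k`. -/
theorem kingman_limit (γ : ℝ) (hγ : 0 < γ) (k p : ℕ) (hp : 1 ≤ p) (hpk : p ≤ k) :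
    Tendsto
      (fun n : ℕ =>
        ((n.factorial : ℝ) / ((n - p).factorial : ℝ)) * BellP (γ / n) k p /
          rf γ k)
      atTop (nhds (γ ^ p * (stirling1 k p : ℝ) / rf γ k)) := by
  have key : Tendsto (fun n : ℕ =>
      ((n.factorial : ℝ) / ((n - p).factorial : ℝ)) * BellP (γ / n) k p)
      atTop (nhds (γ ^ p * (stirling1 k p : ℝ))) := by
    have hlim : Tendsto (fun n : ℕ => ∑ b ∈ Finset.Nat.antidiagonalTuple p k,
        ((k.factorial : ℝ) / (p.factorial : ℝ)) *
          (((n.factorial : ℝ) / ((n - p).factorial : ℝ)) *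
            if ∀ q, 1 ≤ b q then ∏ q, rf (γ / n) (b q) / ((b q).factorial : ℝ) else 0))
        atTop (nhds (∑ b ∈ Finset.Nat.antidiagonalTuple p k,
          if ∀ q, 1 ≤ b q then
            ((k.factorial : ℝ) / (p.factorial : ℝ)) * (γ ^ p * ∏ q, ((b q : ℝ))⁻¹)
          else 0)) := by
      refine tendsto_finset_sum _ fun b _ => ?_
      by_cases hb : ∀ q, 1 ≤ b q
      · simp only [if_pos hb]
        exact (tendsto_term γ p b hb).const_mul _
      · simp only [if_neg hb, mul_zero]
        exact tendsto_const_nhds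
    have hval : (∑ b ∈ Finset.Nat.antidiagonalTuple p k,
        if ∀ q, 1 ≤ b q then
          ((k.factorial : ℝ) / (p.factorial : ℝ)) * (γ ^ p * ∏ q, ((b q : ℝ))⁻¹)
        else 0) = γ ^ p * (stirling1 k p : ℝ) := by
      rw [← stirling_eq k p, Tt, Finset.mul_sum, Finset.mul_sum]
      refine Finset.sum_congr rfl fun b _ => ?_
      by_cases hb : ∀ q, 1 ≤ b q
      · rw [if_pos hb, if_pos hb]; ring
      · rw [if_neg hb, if_neg hb, mul_zero, mul_zero]
    rw [← hval]
    refine hlim.congr fun n => ?_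
    rw [BellP, Finset.mul_sum, Finset.mul_sum]
    exact Finset.sum_congr rfl fun b _ => by ring
  exact key.div_const (rf γ k)
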